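/- arXiv:2106.05944 — 3 statements merged into one kernel-verified Lean document; each statement's English description precedes it below -/
import Mathlib

section
/- Let I be a nonempty proper arc of [n], say I = {(a+t) mod n : 0 ≤ t ≤ k} with 0 ≤ k ≤ n−2, with borders a and b = (a+k) mod n, and let a′ = (a−1) mod n and b′ = (b+1) mod n be the borders of the complementary arc Iᶜ (so that a and a′ are consecutive, and b and b′ are consecutive, in the cyclic order). Let J ⊆ [n] be an arc. Then I ⋔* J if and only if either ({a, a′} ⊆ J and {b, b′} ⊆ Jᶜ) or ({b, b′} ⊆ J and {a, a′} ⊆ Jᶜ). -/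
open Fin.NatCast

/-- The arc `{a, a+1, …, a+k}` (mod `n`) of `Fin n`. -/
def arcSet (n : ℕ) [NeZero n] (a : Fin n) (k : ℕ) : Set (Fin n) :=
  {x | ∃ t : ℕ, t ≤ k ∧ x = a + (t : Fin n)}

/-- `A` is an arc of `Fin n`. -/
def IsArc (n : ℕ) [NeZero n] (A : Set (Fin n)) : Prop :=
  A.Nonempty ∧ ∃ (a : Fin n) (k : ℕ), k ≤ n - 1 ∧ A = arcSet n a k

/-- Two arcs strictly overlap. -/
def StrictOverlap {n : ℕ} (I J : Set (Fin n)) : Prop :=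
  ¬ I ⊆ J ∧ ¬ J ⊆ I ∧ ¬ Iᶜ ⊆ J ∧ ¬ J ⊆ Iᶜ

set_option linter.unusedSectionVars false

section Aux
variable {n : ℕ} [NeZero n]
open Fin.CommRing

lemma mem_arc {a x : Fin n} {k : ℕ} : x ∈ arcSet n a k ↔ (x - a).val ≤ k := by
  constructor
  · rintro ⟨t, ht, rfl⟩
    rw [add_sub_cancel_left]
    calc ((t : Fin n)).val = t % n := Fin.val_natCast ..
    _ ≤ t := Nat.mod_le t n
    _ ≤ k := ht
  · intro h
    exact ⟨(x - a).val, h, by rw [Fin.cast_val_eq_self, add_sub_cancel]⟩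

lemma eq_add_of_val {a x : Fin n} {m : ℕ} (hm : m < n) (h : (x - a).val = m) :
    x = a + (m : Fin n) := by
  have h2 : x - a = (m : Fin n) := by
    apply Fin.ext
    rw [h, Fin.val_natCast, Nat.mod_eq_of_lt hm]
  rw [← h2, add_sub_cancel]

lemma val_add_one' (x : Fin n) : (x + 1).val = (x.val + 1) % n := by
  rw [Fin.val_add, Fin.val_one']
  conv_rhs => rw [Nat.add_mod, Nat.mod_eq_of_lt x.isLt]

lemma val_sub' (u w : Fin n) : (u - w).val = (u.val + (n - w.val)) % n := by
  simp [Fin.sub_def, Nat.add_comm]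

lemma step_down {c x : Fin n} {m : ℕ} (hm : m < n) (h1 : (x - c).val ≤ m)
    (h2 : ¬ (x + 1 - c).val ≤ m) : x = c + (m : Fin n) := by
  have hx1 : x + 1 - c = (x - c) + 1 := add_sub_right_comm x 1 c
  rw [hx1, val_add_one'] at h2
  have hd : (x - c).val < n := (x - c).isLt
  have heq : (x - c).val = m := by
    by_contra hne
    have hlt : (x - c).val < m := lt_of_le_of_ne h1 hne
    have : ((x - c).val + 1) % n = (x - c).val + 1 := Nat.mod_eq_of_lt (by omega)
    omega
  exact eq_add_of_val hm heq

lemma step_up {c x : Fin n} {m : ℕ} (h1 : ¬ (x - c).val ≤ m)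
    (h2 : (x + 1 - c).val ≤ m) : x + 1 = c := by
  have hx1 : x + 1 - c = (x - c) + 1 := add_sub_right_comm x 1 c
  rw [hx1, val_add_one'] at h2
  have hd : (x - c).val < n := (x - c).isLt
  have hn : (x - c).val + 1 = n := by
    by_contra h
    have : ((x - c).val + 1) % n = (x - c).val + 1 := Nat.mod_eq_of_lt (by omega)
    omega
  have h0 : x + 1 - c = 0 := by
    rw [hx1]
    apply Fin.ext
    rw [val_add_one', hn, Nat.mod_self, Fin.val_zero]
  have := sub_eq_zero.mp h0
  exact this

lemma mem_arc_end {a x : Fin n} {k : ℕ} (hk : k < n) :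
    x ∈ arcSet n a k ↔ ((a + (k : Fin n)) - x).val ≤ k := by
  rw [mem_arc]
  have hb : a + (k : Fin n) - x = (k : Fin n) - (x - a) := by ring
  have hkv : ((k : Fin n)).val = k := by rw [Fin.val_natCast, Nat.mod_eq_of_lt hk]
  have hv : ((k : Fin n) - (x - a)).val = (k + (n - (x - a).val)) % n := by
    rw [val_sub', hkv]
  rw [hb, hv]
  have hd : (x - a).val < n := (x - a).isLt
  set d := (x - a).val
  constructor
  · intro h
    have : k + (n - d) = (k - d) + n := by omega
    rw [this, Nat.add_mod_right, Nat.mod_eq_of_lt (by omega)]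
    omega
  · intro h
    by_contra hc
    rw [Nat.mod_eq_of_lt (by omega)] at h
    omega

lemma compl_arc {c : Fin n} {m : ℕ} (hm : m + 1 ≤ n - 1) :
    (arcSet n c m)ᶜ = arcSet n (c + ((m + 1 : ℕ) : Fin n)) (n - 2 - m) := by
  have hn : 0 < n := Nat.pos_of_ne_zero (NeZero.ne n)
  ext z
  simp only [Set.mem_compl_iff, mem_arc, not_le]
  have key : z - (c + ((m + 1 : ℕ) : Fin n)) = (z - c) - ((m + 1 : ℕ) : Fin n) := by ring
  have hv : ((z - c) - ((m + 1 : ℕ) : Fin n)).val = ((z - c).val + (n - (m + 1))) % n := by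
    rw [val_sub', Fin.val_natCast, Nat.mod_eq_of_lt (by omega : m + 1 < n)]
  rw [key, hv]
  have hd : (z - c).val < n := (z - c).isLt
  set d := (z - c).val
  constructor
  · intro h
    have : d + (n - (m + 1)) = (d - (m + 1)) + n := by omega
    rw [this, Nat.add_mod_right, Nat.mod_eq_of_lt (by omega)]
    omega
  · intro h
    by_contra hc
    rw [Nat.mod_eq_of_lt (by omega)] at h
    omega

lemma arc_between {c x y : Fin n} {m : ℕ} (hm : m ≤ n - 1)
    (hx : x ∈ arcSet n c m) (hy : y ∈ arcSet n c m) :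
    arcSet n x ((y - x).val) ⊆ arcSet n c m ∨
    arcSet n y ((x - y).val) ⊆ arcSet n c m := by
  have hn : 0 < n := Nat.pos_of_ne_zero (NeZero.ne n)
  rw [mem_arc] at hx hy
  have key : ∀ u v : Fin n, (u - c).val ≤ m → (v - c).val ≤ m → (u - c).val ≤ (v - c).val →
      arcSet n u ((v - u).val) ⊆ arcSet n c m := by
    intro u v hu hv huv z hz
    rw [mem_arc] at hz ⊢
    have h1 : v - u = (v - c) - (u - c) := by ring
    have h2 : (v - u).val = (v - c).val - (u - c).val := by
      rw [h1, val_sub']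
      have : (v - c).val + (n - (u - c).val) = ((v - c).val - (u - c).val) + n := by
        have := (u - c).isLt; omega
      rw [this, Nat.add_mod_right, Nat.mod_eq_of_lt (by have := (v - c).isLt; omega)]
    have h3 : z - c = (z - u) + (u - c) := by ring
    have h4 : (z - c).val = (z - u).val + (u - c).val := by
      rw [h3, Fin.val_add, Nat.mod_eq_of_lt (by rw [h2] at hz; omega)]
    rw [h4]; rw [h2] at hz; omega
  rcases le_total ((x - c).val) ((y - c).val) with h | h
  · exact Or.inl (key x y hx hy h)
  · exact Or.inr (key y x hy hx h)


lemma compl_back {a : Fin n} {k : ℕ} (hk1 : 1 ≤ k) (hkn : k < n) {z : Fin n}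
    (hz : ¬ (z - a).val ≤ k) : z ∈ arcSet n (a + (k : Fin n)) ((a - (a + (k : Fin n))).val) := by
  rw [mem_arc]
  have hkv : ((k : Fin n)).val = k := by rw [Fin.val_natCast, Nat.mod_eq_of_lt hkn]
  have h5 : (a - (a + (k : Fin n))).val = n - k := by
    have he : a - (a + (k : Fin n)) = 0 - (k : Fin n) := by ring
    rw [he, val_sub', Fin.val_zero, hkv, Nat.zero_add, Nat.mod_eq_of_lt (by omega)]
  have h6 : (z - (a + (k : Fin n))).val = (z - a).val - k := by
    have he : z - (a + (k : Fin n)) = (z - a) - (k : Fin n) := by ring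
    rw [he, val_sub', hkv]
    have hd := (z - a).isLt
    have : (z - a).val + (n - k) = ((z - a).val - k) + n := by omega
    rw [this, Nat.add_mod_right, Nat.mod_eq_of_lt (by omega)]
  rw [h5, h6]
  have hd := (z - a).isLt
  omega

end Aux

/-- An arc `I` with borders `a` and `b = a + k` strictly overlaps an arc `J` iff
`J` contains exactly one of the two pairs of consecutive border elements
`{a, a-1}` and `{b, b+1}` and avoids the other. -/
theorem statement8 (n : ℕ) [NeZero n] (a : Fin n) (k : ℕ) (hk : k ≤ n - 2)
    (J : Set (Fin n)) (hJ : IsArc n J) :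
    StrictOverlap (arcSet n a k) J ↔
      ((({a, a - 1} : Set (Fin n)) ⊆ J ∧
          ({a + (k : Fin n), a + (k : Fin n) + 1} : Set (Fin n)) ⊆ Jᶜ) ∨
       (({a + (k : Fin n), a + (k : Fin n) + 1} : Set (Fin n)) ⊆ J ∧
          ({a, a - 1} : Set (Fin n)) ⊆ Jᶜ)) := by
  have hn : 0 < n := Nat.pos_of_ne_zero (NeZero.ne n)
  obtain ⟨hJne, c, m, hm, rfl⟩ := hJ
  have hm' : m < n := by omega
  constructor
  · rintro ⟨h1, h2, h3, h4⟩
    rw [Set.not_subset] at h1 h2 h3 h4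
    rcases Nat.eq_zero_or_pos k with hk0 | hk1
    · -- k = 0 : contradiction
      exfalso
      subst hk0
      obtain ⟨z, hzI, hzJ⟩ := h1
      obtain ⟨w, hwJ, hwI⟩ := h4
      rw [mem_arc, Nat.le_zero] at hzI
      have hz : z = a := by simpa using eq_add_of_val hn hzI
      have hw : w ∈ arcSet n a 0 := by simpa using hwI
      rw [mem_arc, Nat.le_zero] at hw
      have hw' : w = a := by simpa using eq_add_of_val hn hw
      rw [hz] at hzJ; rw [hw'] at hwJ
      exact hzJ hwJ
    · have hn3 : 3 ≤ n := by omega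
      have hkn : k < n := by omega
      have hkv : ((k : Fin n)).val = k := by rw [Fin.val_natCast, Nat.mod_eq_of_lt hkn]
      have hbval : ((a + (k : Fin n)) - a).val = k := by rw [add_sub_cancel_left, hkv]
      have hcompl := compl_arc (n := n) (c := a) (m := k) (by omega)
      -- Claim A : a ∈ J ↔ a - 1 ∈ J
      have hA : a ∈ arcSet n c m ↔ a - 1 ∈ arcSet n c m := by
        constructor
        · intro haJ
          by_contra ha'J
          rw [mem_arc] at haJ ha'J
          have hsu := step_up (c := c) (x := a - 1) (m := m) ha'J (by rwa [sub_add_cancel])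
          rw [sub_add_cancel] at hsu
          subst hsu
          rcases le_or_gt k m with h | h
          · obtain ⟨z, hzI, hzJ⟩ := h1
            exact hzJ (mem_arc.mpr (le_trans (mem_arc.mp hzI) h))
          · obtain ⟨z, hzJ, hzI⟩ := h2
            exact hzI (mem_arc.mpr (le_trans (mem_arc.mp hzJ) (le_of_lt h)))
        · intro ha'J
          by_contra haJ
          rw [mem_arc] at haJ ha'J
          have hsd := step_down (c := c) (x := a - 1) hm' ha'J (by rwa [sub_add_cancel])
          have hend : (a + ((k + 1 : ℕ) : Fin n)) + ((n - 2 - k : ℕ) : Fin n) = a - 1 := by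
            rw [add_assoc, ← Nat.cast_add]
            have h7 : (k + 1) + (n - 2 - k) = n - 1 := by omega
            rw [h7]
            have h8 : ((n - 1 : ℕ) : Fin n) = -1 := by
              open Fin.CommRing in rw [Nat.cast_sub (by omega), Fin.natCast_self, Nat.cast_one, zero_sub]
            rw [h8]; open Fin.CommRing in ring
          rcases le_or_gt m (n - 2 - k) with h | h
          · obtain ⟨z, hzJ, hzI⟩ := h4
            have hz1 := (mem_arc_end hm').mp hzJ
            rw [← hsd] at hz1
            apply hzI
            rw [hcompl, mem_arc_end (by omega : n - 2 - k < n), hend]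
            omega
          · obtain ⟨z, hzI, hzJ⟩ := h3
            rw [hcompl, mem_arc_end (by omega : n - 2 - k < n), hend] at hzI
            apply hzJ
            rw [mem_arc_end hm', ← hsd]
            omega
      -- Claim B : b ∈ J ↔ b + 1 ∈ J
      have hB : (a + (k : Fin n)) ∈ arcSet n c m ↔ (a + (k : Fin n)) + 1 ∈ arcSet n c m := by
        constructor
        · intro hbJ
          by_contra hb'J
          rw [mem_arc] at hbJ hb'J
          have hsd := step_down hm' hbJ hb'J
          rcases le_or_gt k m with h | h
          · obtain ⟨z, hzI, hzJ⟩ := h1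
            have hz1 := (mem_arc_end hkn).mp hzI
            apply hzJ
            rw [mem_arc_end hm', ← hsd]
            omega
          · obtain ⟨z, hzJ, hzI⟩ := h2
            have hz1 := (mem_arc_end hm').mp hzJ
            rw [← hsd] at hz1
            apply hzI
            rw [mem_arc_end hkn]
            omega
        · intro hb'J
          by_contra hbJ
          rw [mem_arc] at hbJ hb'J
          have hsu := step_up hbJ hb'J
          have hcs : a + ((k + 1 : ℕ) : Fin n) = c := by
            rw [← hsu, Nat.cast_add, Nat.cast_one, ← add_assoc]
          rcases le_or_gt m (n - 2 - k) with h | h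
          · obtain ⟨z, hzJ, hzI⟩ := h4
            apply hzI
            rw [hcompl, mem_arc, hcs]
            exact le_trans (mem_arc.mp hzJ) h
          · obtain ⟨z, hzI, hzJ⟩ := h3
            rw [hcompl, mem_arc, hcs] at hzI
            exact hzJ (mem_arc.mpr (by omega))
      -- Claim C : ¬ (a ∈ J ↔ b ∈ J)
      have hC : ¬ (a ∈ arcSet n c m ↔ (a + (k : Fin n)) ∈ arcSet n c m) := by
        intro hiff
        by_cases haJ : a ∈ arcSet n c m
        · have hbJ := hiff.mp haJ
          rcases arc_between hm haJ hbJ with h | h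
          · obtain ⟨z, hzI, hzJ⟩ := h1
            exact hzJ (h (by rw [mem_arc, hbval]; exact mem_arc.mp hzI))
          · obtain ⟨z, hzI, hzJ⟩ := h3
            rw [Set.mem_compl_iff, mem_arc] at hzI
            exact hzJ (h (compl_back hk1 hkn hzI))
        · have hbJ : (a + (k : Fin n)) ∉ arcSet n c m := fun h => haJ (hiff.mpr h)
          have hmn2 : m + 1 ≤ n - 1 := by
            by_contra h
            apply haJ
            rw [mem_arc]
            have := (a - c).isLt
            omega
          have hJc := compl_arc (n := n) (c := c) (m := m) hmn2
          have haJc : a ∈ (arcSet n c m)ᶜ := haJ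
          have hbJc : (a + (k : Fin n)) ∈ (arcSet n c m)ᶜ := hbJ
          rw [hJc] at haJc hbJc
          rcases arc_between (by omega : n - 2 - m ≤ n - 1) haJc hbJc with h | h
          · obtain ⟨z, hzJ, hzI⟩ := h4
            have hzI' : z ∈ arcSet n a k := by simpa using hzI
            have hz : z ∈ (arcSet n c m)ᶜ := by
              rw [hJc]
              exact h (by rw [mem_arc, hbval]; exact mem_arc.mp hzI')
            exact hz hzJ
          · obtain ⟨z, hzJ, hzI⟩ := h2
            rw [mem_arc] at hzI
            have hz : z ∈ (arcSet n c m)ᶜ := by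
              rw [hJc]
              exact h (compl_back hk1 hkn hzI)
            exact hz hzJ
      -- conclude
      by_cases haJ : a ∈ arcSet n c m
      · left
        have hbJ : (a + (k : Fin n)) ∉ arcSet n c m := fun h => hC ⟨fun _ => h, fun _ => haJ⟩
        refine ⟨?_, ?_⟩
        · rw [Set.insert_subset_iff, Set.singleton_subset_iff]
          exact ⟨haJ, hA.mp haJ⟩
        · rw [Set.insert_subset_iff, Set.singleton_subset_iff]
          exact ⟨hbJ, fun h => hbJ (hB.mpr h)⟩
      · right
        have hbJ : (a + (k : Fin n)) ∈ arcSet n c m := by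
          by_contra h
          exact hC ⟨fun h' => absurd h' haJ, fun h' => absurd h' h⟩
        refine ⟨?_, ?_⟩
        · rw [Set.insert_subset_iff, Set.singleton_subset_iff]
          exact ⟨hbJ, hB.mp hbJ⟩
        · rw [Set.insert_subset_iff, Set.singleton_subset_iff]
          exact ⟨haJ, fun h => haJ (hA.mpr h)⟩
  · -- backward
    rintro (⟨hin, hout⟩ | ⟨hin, hout⟩)
    · have haJ : a ∈ arcSet n c m := hin (Set.mem_insert _ _)
      have ha'J : a - 1 ∈ arcSet n c m := hin (Set.mem_insert_of_mem _ rfl)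
      have hbJ : (a + (k : Fin n)) ∉ arcSet n c m := hout (Set.mem_insert _ _)
      have hb'J : (a + (k : Fin n)) + 1 ∉ arcSet n c m := hout (Set.mem_insert_of_mem _ rfl)
      have hn2 : 2 ≤ n := by
        by_contra h
        have hn1 : n = 1 := by omega
        subst hn1
        exact hbJ ((Subsingleton.elim a (a + (k : Fin 1))) ▸ haJ)
      have hkn : k < n := by omega
      have hkv : ((k : Fin n)).val = k := by rw [Fin.val_natCast, Nat.mod_eq_of_lt hkn]
      have haI : a ∈ arcSet n a k := mem_arc.mpr (by simp)
      have hbI : (a + (k : Fin n)) ∈ arcSet n a k := mem_arc.mpr (by rw [add_sub_cancel_left, hkv])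
      have hb'I : (a + (k : Fin n)) + 1 ∉ arcSet n a k := by
        rw [mem_arc]
        have he : a + (k : Fin n) + 1 - a = (k : Fin n) + 1 := by open Fin.CommRing in ring
        rw [he, val_add_one', hkv, Nat.mod_eq_of_lt (by omega)]
        omega
      have ha'I : a - 1 ∉ arcSet n a k := by
        rw [mem_arc]
        have he : a - 1 - a = 0 - 1 := by open Fin.CommRing in ring
        rw [he, val_sub', Fin.val_zero, Fin.val_one', Nat.mod_eq_of_lt (by omega : 1 < n),
          Nat.zero_add, Nat.mod_eq_of_lt (by omega)]
        omega
      exact ⟨fun h => hbJ (h hbI), fun h => ha'I (h ha'J),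
        fun h => hb'J (h hb'I), fun h => (h haJ) haI⟩
    · have hbJ : (a + (k : Fin n)) ∈ arcSet n c m := hin (Set.mem_insert _ _)
      have hb'J : (a + (k : Fin n)) + 1 ∈ arcSet n c m := hin (Set.mem_insert_of_mem _ rfl)
      have haJ : a ∉ arcSet n c m := hout (Set.mem_insert _ _)
      have ha'J : a - 1 ∉ arcSet n c m := hout (Set.mem_insert_of_mem _ rfl)
      have hn2 : 2 ≤ n := by
        by_contra h
        have hn1 : n = 1 := by omega
        subst hn1
        exact haJ ((Subsingleton.elim (a + (k : Fin 1)) a) ▸ hbJ)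
      have hkn : k < n := by omega
      have hkv : ((k : Fin n)).val = k := by rw [Fin.val_natCast, Nat.mod_eq_of_lt hkn]
      have haI : a ∈ arcSet n a k := mem_arc.mpr (by simp)
      have hbI : (a + (k : Fin n)) ∈ arcSet n a k := mem_arc.mpr (by rw [add_sub_cancel_left, hkv])
      have hb'I : (a + (k : Fin n)) + 1 ∉ arcSet n a k := by
        rw [mem_arc]
        have he : a + (k : Fin n) + 1 - a = (k : Fin n) + 1 := by open Fin.CommRing in ring
        rw [he, val_add_one', hkv, Nat.mod_eq_of_lt (by omega)]
        omega
      have ha'I : a - 1 ∉ arcSet n a k := by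
        rw [mem_arc]
        have he : a - 1 - a = 0 - 1 := by open Fin.CommRing in ring
        rw [he, val_sub', Fin.val_zero, Fin.val_one', Nat.mod_eq_of_lt (by omega : 1 < n),
          Nat.zero_add, Nat.mod_eq_of_lt (by omega)]
        omega
      exact ⟨fun h => haJ (h haI), fun h => hb'I (h hb'J),
        fun h => ha'J (h ha'I), fun h => (h hbJ) hbI⟩
end

section
/- Let D be an n×n circular Robinson dissimilarity matrix. Let I be a nonempty proper arc of [n] with borders a, b, let a′ = (a−1) mod n and b′ = (b+1) mod n be the borders of Iᶜ, and let 𝒜, ℬ ⊆ I and 𝒜′, ℬ′ ⊆ Iᶜ be pairwise disjoint sets with a ∈ 𝒜, b ∈ ℬ, a′ ∈ 𝒜′, b′ ∈ ℬ′, such that either for all (x′, x, y, y′) ∈ 𝒜′×𝒜×ℬ×ℬ′ the quadruple (x′, x, y, y′) is cyclically ordered, or for all (x′, x, y, y′) ∈ 𝒜′×𝒜×ℬ×ℬ′ the quadruple (x′, y, x, y′) is cyclically ordered. Then for every z ∈ [n], writing f_z(x) = D(z,x), the following are equivalent: (1) there exists r > 0 such that {a, a′} ⊆ B_r(z) and {b,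 b′} ∩ B_r(z) = ∅; (2) there exist (x′, x, y, y′) ∈ 𝒜′×𝒜×ℬ×ℬ′ with max{f_z(x), f_z(x′)} < min{f_z(y), f_z(y′)}; (3) max{min_{x∈𝒜} f_z(x), min_{x′∈𝒜′} f_z(x′)} < min{max_{y∈ℬ} f_z(y), max_{y′∈ℬ′} f_z(y′)}. -/
open Fin.NatCast

/-- The standard cyclic order on `Fin n`. -/
def CycOrd {n : ℕ} (i j k : Fin n) : Prop :=
  (i < j ∧ j < k) ∨ (j < k ∧ k < i) ∨ (k < i ∧ i < j)

/-- `i,j,k,l` are pairwise distinct and cyclically ordered. -/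
def CycOrd4 {n : ℕ} (i j k l : Fin n) : Prop :=
  i ≠ j ∧ i ≠ k ∧ i ≠ l ∧ j ≠ k ∧ j ≠ l ∧ k ≠ l ∧ CycOrd i j k ∧ CycOrd i k l

/-- `D` is a dissimilarity matrix. -/
def IsDissim {n : ℕ} (D : Fin n → Fin n → ℝ) : Prop :=
  (∀ i j, D i j = D j i) ∧ (∀ i j, 0 ≤ D i j) ∧ (∀ i, D i i = 0)

/-- `D` is a circular Robinson matrix. -/
def CircRobinson {n : ℕ} (D : Fin n → Fin n → ℝ) : Prop :=
  ∀ i j k l : Fin n, CycOrd4 i j k l → min (D j k) (D k l) ≤ D i k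

lemma sub_val_cases {n : ℕ} [NeZero n] (u r : Fin n) :
    ((u - r).val = n - r.val + u.val ∧ n - r.val + u.val < n) ∨
    ((u - r).val = n - r.val + u.val - n ∧ n ≤ n - r.val + u.val) := by
  have hu := u.isLt
  have hr := r.isLt
  have h : (u - r).val = (n - r.val + u.val) % n := by rw [Fin.sub_def]
  rcases Nat.lt_or_ge (n - r.val + u.val) n with h' | h'
  · exact Or.inl ⟨by rw [h, Nat.mod_eq_of_lt h'], h'⟩
  · refine Or.inr ⟨?_, h'⟩
    rw [h, Nat.mod_eq_sub_mod h', Nat.mod_eq_of_lt (by omega)]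

lemma cyc_iff' {n : ℕ} [NeZero n] (r u v w : Fin n) :
    CycOrd u v w ↔ ((u - r).val < (v - r).val ∧ (v - r).val < (w - r).val ∨
      (v - r).val < (w - r).val ∧ (w - r).val < (u - r).val ∨
      (w - r).val < (u - r).val ∧ (u - r).val < (v - r).val) := by
  have hu := u.isLt
  have hv := v.isLt
  have hw := w.isLt
  have hr := r.isLt
  simp only [CycOrd, Fin.lt_def]
  rcases sub_val_cases u r with ⟨e1, l1⟩ | ⟨e1, l1⟩ <;>
  rcases sub_val_cases v r with ⟨e2, l2⟩ | ⟨e2, l2⟩ <;>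
  rcases sub_val_cases w r with ⟨e3, l3⟩ | ⟨e3, l3⟩ <;>
  rw [e1, e2, e3] <;> omega

lemma eq_iff' {n : ℕ} [NeZero n] (r u v : Fin n) : u = v ↔ (u - r).val = (v - r).val := by
  constructor
  · rintro rfl; rfl
  · intro h
    exact sub_left_inj.mp (Fin.val_injective h)

lemma coord_arc {n : ℕ} [NeZero n] (a : Fin n) (s t : ℕ) (hs : s < n) (hts : t < s) :
    ((a + (t : Fin n)) - (a + (s : Fin n))).val = n - s + t := by
  have h : (a + (t : Fin n)) - (a + (s : Fin n)) = (t : Fin n) - (s : Fin n) := by open Fin.CommRing in ring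
  rw [h]
  have e1 : ((t : Fin n)).val = t := Fin.val_cast_of_lt (by omega)
  have e2 : ((s : Fin n)).val = s := Fin.val_cast_of_lt hs
  rcases sub_val_cases (t : Fin n) (s : Fin n) with ⟨e, l⟩ | ⟨e, l⟩ <;>
    rw [e1, e2] at e l <;> omega

/-- Correctness of border-candidate orientation: for border candidates
`(A', A, B, B')` of the proper arc `I = {a, …, a+k}` (with borders `a`, `b = a+k`,
and `a' = a-1`, `b' = b+1` the borders of `Iᶜ`), the three tests are equivalent. -/
theorem statement10 (n : ℕ) [NeZero n] (D : Fin n → Fin n → ℝ) (hD : IsDissim D)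
    (hR : CircRobinson D)
    (a : Fin n) (k : ℕ) (hk : k ≤ n - 2)
    (A A' B B' : Finset (Fin n))
    (hA : ↑A ⊆ arcSet n a k) (hB : ↑B ⊆ arcSet n a k)
    (hA' : ↑A' ⊆ (arcSet n a k)ᶜ) (hB' : ↑B' ⊆ (arcSet n a k)ᶜ)
    (hAB : Disjoint A B) (hAA' : Disjoint A A') (hAB' : Disjoint A B')
    (hBA' : Disjoint B A') (hBB' : Disjoint B B') (hA'B' : Disjoint A' B')
    (haA : a ∈ A) (hbB : a + (k : Fin n) ∈ B)
    (ha'A' : a - 1 ∈ A') (hb'B' : a + (k : Fin n) + 1 ∈ B')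
    (horder :
      (∀ x' ∈ A', ∀ x ∈ A, ∀ y ∈ B, ∀ y' ∈ B', CycOrd4 x' x y y') ∨
      (∀ x' ∈ A', ∀ x ∈ A, ∀ y ∈ B, ∀ y' ∈ B', CycOrd4 x' y x y'))
    (z : Fin n) :
    ((∃ r : ℝ, 0 < r ∧
        ({a, a - 1} : Set (Fin n)) ⊆ {j | D z j ≤ r} ∧
        ({a + (k : Fin n), a + (k : Fin n) + 1} : Set (Fin n)) ∩ {j | D z j ≤ r} = ∅) ↔
      (∃ x' ∈ A', ∃ x ∈ A, ∃ y ∈ B, ∃ y' ∈ B',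
        max (D z x) (D z x') < min (D z y) (D z y'))) ∧
    ((∃ x' ∈ A', ∃ x ∈ A, ∃ y ∈ B, ∃ y' ∈ B',
        max (D z x) (D z x') < min (D z y) (D z y')) ↔
      max (A.inf' ⟨a, haA⟩ (D z)) (A'.inf' ⟨a - 1, ha'A'⟩ (D z)) <
        min (B.sup' ⟨a + (k : Fin n), hbB⟩ (D z))
            (B'.sup' ⟨a + (k : Fin n) + 1, hb'B'⟩ (D z))) := by
  obtain ⟨hsym, hnn, hdiag⟩ := hD
  -- k ≥ 1
  rcases Nat.eq_zero_or_pos k with hk0 | hk1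
  · exfalso
    subst hk0
    simp only [Nat.cast_zero, add_zero] at hbB
    exact Finset.disjoint_left.mp hAB haA hbB
  -- k + 3 ≤ n
  have hk3 : k + 3 ≤ n := by
    by_contra hcon
    have hkn : k + 2 = n := by omega
    have h0 : ((k : Fin n)) + 1 + 1 = 0 := by
      have h1 : ((k + 2 : ℕ) : Fin n) = ((n : ℕ) : Fin n) := by rw [hkn]
      rw [Fin.natCast_self] at h1
      push_cast at h1
      open Fin.CommRing in linear_combination h1
    have h2 : a + (k : Fin n) + 1 = a - 1 := by open Fin.CommRing in linear_combination h0
    rw [h2] at hb'B'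
    exact Finset.disjoint_left.mp hA'B' ha'A' hb'B'
  set R : Fin n := a + (k : Fin n) + 1 with hRdef
  have hR' : R = a + ((k + 1 : ℕ) : Fin n) := by rw [hRdef]; push_cast; open Fin.CommRing in ring
  -- basic tools
  have hne : ∀ u v : Fin n, (u - R).val ≠ (v - R).val → u ≠ v :=
    fun u v h e => h (by rw [e])
  have hinj : ∀ u v : Fin n, (u - R).val = (v - R).val → u = v :=
    fun u v h => (eq_iff' R u v).mpr h
  have hcyc : ∀ u v w : Fin n,
      ((u - R).val < (v - R).val ∧ (v - R).val < (w - R).val ∨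
       (v - R).val < (w - R).val ∧ (w - R).val < (u - R).val ∨
       (w - R).val < (u - R).val ∧ (u - R).val < (v - R).val) → CycOrd u v w :=
    fun u v w h => (cyc_iff' R u v w).mpr h
  have hcyc' : ∀ u v w : Fin n, CycOrd u v w →
      ((u - R).val < (v - R).val ∧ (v - R).val < (w - R).val ∨
       (v - R).val < (w - R).val ∧ (w - R).val < (u - R).val ∨
       (w - R).val < (u - R).val ∧ (u - R).val < (v - R).val) :=
    fun u v w h => (cyc_iff' R u v w).mp h
  -- coordinates
  have hcoordt : ∀ t : ℕ, t ≤ k → ((a + (t : Fin n)) - R).val = n - (k + 1) + t := by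
    intro t ht
    rw [hR']
    exact coord_arc a (k + 1) t (by omega) (by omega)
  have Hca : (a - R).val = n - (k + 1) := by
    have h := hcoordt 0 (Nat.zero_le k)
    simp only [Nat.cast_zero, add_zero] at h
    omega
  have Hcb : ((a + (k : Fin n)) - R).val = n - 1 := by
    have h := hcoordt k le_rfl
    omega
  have Hcb' : (R - R).val = 0 := by rw [sub_self]; rfl
  have Hca' : ((a - 1) - R).val = n - (k + 2) := by
    have h : (a - 1) - R = (0 : Fin n) - ((k + 2 : ℕ) : Fin n) := by
      rw [hRdef]; push_cast; open Fin.CommRing in ring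
    rw [h]
    have e2 : (((k + 2 : ℕ) : Fin n)).val = k + 2 := Fin.val_cast_of_lt (by omega)
    rcases sub_val_cases (0 : Fin n) (((k + 2 : ℕ)) : Fin n) with ⟨e, l⟩ | ⟨e, l⟩ <;>
      rw [e2, Fin.val_zero] at e l <;> omega
  have hmemI : ∀ u : Fin n, u ∈ arcSet n a k →
      n - (k + 1) ≤ (u - R).val ∧ (u - R).val ≤ n - 1 := by
    rintro u ⟨t, ht, rfl⟩
    rw [hcoordt t ht]
    omega
  have hnot : ∀ u : Fin n, u ∉ arcSet n a k → (u - R).val ≤ n - (k + 2) := by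
    intro u hu
    by_contra hcon
    push_neg at hcon
    have hlt : (u - R).val < n := (u - R).isLt
    apply hu
    refine ⟨(u - R).val - (n - (k + 1)), by omega, ?_⟩
    apply hinj
    rw [hcoordt _ (by omega : (u - R).val - (n - (k + 1)) ≤ k)]
    omega
  -- the key step
  have key : ∀ x' ∈ A', ∀ x ∈ A, ∀ y ∈ B, ∀ y' ∈ B',
      max (D z x) (D z x') < min (D z y) (D z y') →
      max (D z a) (D z (a - 1)) < min (D z (a + (k : Fin n))) (D z R) := by
    intro x' hmx' x hmx y hmy y' hmy' hw
    rcases horder with hor | hor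
    · -- orientation 1
      have h45 := hor x' hmx' x hmx y hmy y' hmy'
      have h6 := hcyc' _ _ _ h45.2.2.2.2.2.2.1
      have h7 := hcyc' _ _ _ h45.2.2.2.2.2.2.2
      obtain ⟨hxr1, hxr2⟩ := hmemI x (hA hmx)
      obtain ⟨hyr1, hyr2⟩ := hmemI y (hB hmy)
      have hx'r := hnot x' (hA' hmx')
      have hy'r := hnot y' (hB' hmy')
      -- z ≠ y, z ≠ y'
      have hzy : z ≠ y := by
        intro h
        rw [h, hdiag] at hw
        have h1 : min (0 : ℝ) (D y y') ≤ 0 := min_le_left _ _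
        have h2 : 0 ≤ D y x := hnn y x
        have h3 : D y x ≤ max (D y x) (D y x') := le_max_left _ _
        linarith
      have hzy' : z ≠ y' := by
        intro h
        rw [h, hdiag] at hw
        have h1 : min (D y' y) (0 : ℝ) ≤ 0 := min_le_right _ _
        have h2 : 0 ≤ D y' x := hnn y' x
        have h3 : D y' x ≤ max (D y' x) (D y' x') := le_max_left _ _
        linarith
      have hczy : (z - R).val ≠ (y - R).val := fun h => hzy (hinj z y h)
      have hczy' : (z - R).val ≠ (y' - R).val := fun h => hzy' (hinj z y' h)
      -- step 1 : position of z
      have hz12 : (y' - R).val < (z - R).val ∧ (z - R).val < (y - R).val := by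
        by_contra hcon
        have h8 := hR x y z y'
          ⟨hne _ _ (by omega), hne _ _ (by omega), hne _ _ (by omega),
           hne _ _ (by omega), hne _ _ (by omega), hne _ _ (by omega),
           hcyc _ _ _ (by omega), hcyc _ _ _ (by omega)⟩
        rw [hsym y z, hsym x z] at h8
        have h9 : D z x ≤ max (D z x) (D z x') := le_max_left _ _
        linarith
      obtain ⟨hz1, hz2⟩ := hz12
      -- step 2 : points on the A-side are close
      have step2 : ∀ p : Fin n, n - (k + 2) ≤ (p - R).val → (p - R).val ≤ (x - R).val →
          D z p ≤ max (D z x) (D z x') := by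
        intro p hp1 hp2
        rcases Nat.lt_trichotomy ((p - R).val) ((z - R).val) with hpz | hpz | hpz
        · by_cases hpx' : (p - R).val = (x' - R).val
          · rw [hinj p x' hpx']
            exact le_max_right _ _
          · have h9 := hR x' p z y
              ⟨hne _ _ (by omega), hne _ _ (by omega), hne _ _ (by omega),
               hne _ _ (by omega), hne _ _ (by omega), hne _ _ (by omega),
               hcyc _ _ _ (by omega), hcyc _ _ _ (by omega)⟩
            rw [hsym p z, hsym x' z] at h9
            by_contra hcon
            push_neg at hcon
            rcases min_le_iff.mp h9 with h | h
            · have := le_max_right (D z x) (D z x')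
              linarith
            · have h10 := min_le_left (D z y) (D z y')
              have h11 := le_max_right (D z x) (D z x')
              linarith
        · rw [hinj p z hpz, hdiag]
          exact le_trans (hnn z x) (le_max_left _ _)
        · by_cases hpx : (p - R).val = (x - R).val
          · rw [hinj p x hpx]
            exact le_max_left _ _
          · have h9 := hR x y' z p
              ⟨hne _ _ (by omega), hne _ _ (by omega), hne _ _ (by omega),
               hne _ _ (by omega), hne _ _ (by omega), hne _ _ (by omega),
               hcyc _ _ _ (by omega), hcyc _ _ _ (by omega)⟩
            rw [hsym y' z, hsym x z] at h9
            by_contra hcon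
            push_neg at hcon
            rcases min_le_iff.mp h9 with h | h
            · have h10 := min_le_right (D z y) (D z y')
              have h11 := le_max_left (D z x) (D z x')
              linarith
            · have := le_max_left (D z x) (D z x')
              linarith
      -- step 3 : points on the B-side are far
      have step3 : ∀ q : Fin n, ((y - R).val ≤ (q - R).val ∨ (q - R).val ≤ (y' - R).val) →
          min (D z y) (D z y') ≤ D z q := by
        intro q hq
        by_cases hq1 : (q - R).val = (y - R).val
        · rw [hinj q y hq1]
          exact min_le_left _ _
        by_cases hq2 : (q - R).val = (y' - R).val
        · rw [hinj q y' hq2]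
          exact min_le_right _ _
        have h9 := hR q y' z y
          ⟨hne _ _ (by omega), hne _ _ (by omega), hne _ _ (by omega),
           hne _ _ (by omega), hne _ _ (by omega), hne _ _ (by omega),
           hcyc _ _ _ (by omega), hcyc _ _ _ (by omega)⟩
        rw [hsym y' z, hsym q z] at h9
        rw [min_comm]
        exact h9
      have k1 : D z a ≤ max (D z x) (D z x') := step2 a (by omega) (by omega)
      have k2 : D z (a - 1) ≤ max (D z x) (D z x') := step2 (a - 1) (by omega) (by omega)
      have k3 : min (D z y) (D z y') ≤ D z (a + (k : Fin n)) :=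
        step3 (a + (k : Fin n)) (Or.inl (by omega))
      have k4 : min (D z y) (D z y') ≤ D z R := step3 R (Or.inr (by omega))
      exact max_lt (lt_of_le_of_lt k1 (lt_of_lt_of_le hw (le_min k3 k4)))
        (lt_of_le_of_lt k2 (lt_of_lt_of_le hw (le_min k3 k4)))
    · -- orientation 2 : impossible
      exfalso
      have h4 := hor (a - 1) ha'A' a haA (a + (k : Fin n)) hbB R hb'B'
      have h5 := hcyc' _ _ _ h4.2.2.2.2.2.2.1
      omega
  constructor
  · constructor
    · rintro ⟨r, hr, hsub, hint⟩
      have h1 : D z a ≤ r := hsub (Set.mem_insert _ _)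
      have h2 : D z (a - 1) ≤ r := hsub (Set.mem_insert_of_mem _ rfl)
      have h3 : ¬ D z (a + (k : Fin n)) ≤ r := fun h =>
        Set.eq_empty_iff_forall_notMem.mp hint (a + (k : Fin n)) ⟨Set.mem_insert _ _, h⟩
      have h4 : ¬ D z R ≤ r := fun h =>
        Set.eq_empty_iff_forall_notMem.mp hint R ⟨Set.mem_insert_of_mem _ rfl, h⟩
      push_neg at h3 h4
      exact ⟨a - 1, ha'A', a, haA, a + (k : Fin n), hbB, R, hb'B',
        max_lt (lt_of_le_of_lt h1 (lt_min h3 h4)) (lt_of_le_of_lt h2 (lt_min h3 h4))⟩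
    · rintro ⟨x', hx', x, hx, y, hy, y', hy', hlt⟩
      have hkey := key x' hx' x hx y hy y' hy' hlt
      have h0 : 0 ≤ max (D z a) (D z (a - 1)) := le_trans (hnn z a) (le_max_left _ _)
      refine ⟨(max (D z a) (D z (a - 1)) + min (D z (a + (k : Fin n))) (D z R)) / 2,
        by linarith, ?_, ?_⟩
      · intro j hj
        simp only [Set.mem_insert_iff, Set.mem_singleton_iff] at hj
        simp only [Set.mem_setOf_eq]
        rcases hj with h | h <;> rw [h]
        · have := le_max_left (D z a) (D z (a - 1)); linarith
        · have := le_max_right (D z a) (D z (a - 1)); linarith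
      · apply Set.eq_empty_iff_forall_notMem.mpr
        rintro j ⟨hj1, hj2⟩
        simp only [Set.mem_insert_iff, Set.mem_singleton_iff] at hj1
        simp only [Set.mem_setOf_eq] at hj2
        rcases hj1 with h | h <;> rw [h] at hj2
        · have := min_le_left (D z (a + (k : Fin n))) (D z R); linarith
        · have := min_le_right (D z (a + (k : Fin n))) (D z R); linarith
  · constructor
    · rintro ⟨x', hx', x, hx, y, hy, y', hy', hlt⟩
      have i1 : A.inf' ⟨a, haA⟩ (D z) ≤ D z x := Finset.inf'_le _ hx
      have i2 : A'.inf' ⟨a - 1, ha'A'⟩ (D z) ≤ D z x' := Finset.inf'_le _ hx'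
      have s1 : D z y ≤ B.sup' ⟨a + (k : Fin n), hbB⟩ (D z) := Finset.le_sup' _ hy
      have s2 : D z y' ≤ B'.sup' ⟨R, hb'B'⟩ (D z) := Finset.le_sup' _ hy'
      have m1 := le_max_left (D z x) (D z x')
      have m2 := le_max_right (D z x) (D z x')
      have m3 := min_le_left (D z y) (D z y')
      have m4 := min_le_right (D z y) (D z y')
      refine max_lt (lt_min (by linarith) (by linarith)) (lt_min (by linarith) (by linarith))
    · intro hlt
      obtain ⟨x, hx, hx2⟩ := Finset.exists_mem_eq_inf' (⟨a, haA⟩ : A.Nonempty) (D z)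
      obtain ⟨x', hx', hx'2⟩ := Finset.exists_mem_eq_inf' (⟨a - 1, ha'A'⟩ : A'.Nonempty) (D z)
      obtain ⟨y, hy, hy2⟩ :=
        Finset.exists_mem_eq_sup' (⟨a + (k : Fin n), hbB⟩ : B.Nonempty) (D z)
      obtain ⟨y', hy', hy'2⟩ := Finset.exists_mem_eq_sup' (⟨R, hb'B'⟩ : B'.Nonempty) (D z)
      exact ⟨x', hx', x, hx, y, hy, y', hy',
        by rw [← hx2, ← hx'2, ← hy2, ← hy'2]; exact hlt⟩
end

section
/- Let D be an n×n strict circular Robinson dissimilarity matrix and let I = {(a+t) mod n : 0 ≤ t ≤ k} with 0 ≤ k ≤ n−2 be a nonempty proper arc of [n] with borders a and b = (a+k) mod n. Then for every i ∈ Iᶜ, every minimizer of j ↦ D(i,j) over j ∈ I is contained in {a, b}. -/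
open Fin.NatCast

/-- `D` is a strict circular Robinson matrix. -/
def StrictCircRobinson {n : ℕ} (D : Fin n → Fin n → ℝ) : Prop :=
  ∀ i j k l : Fin n, CycOrd4 i j k l → min (D j k) (D k l) < D i k

open Classical in
/-- The permutation of `Fin n` reversing the arc `{a, …, a+k}`. -/
noncomputable def arcRev (n : ℕ) [NeZero n] (a : Fin n) (k : ℕ) (x : Fin n) : Fin n :=
  if (∃ t : ℕ, t ≤ k ∧ x = a + (t : Fin n)) then a + (k : Fin n) - (x - a) else x

lemma subval {n : ℕ} (x y : Fin n) :
    ((y - x) : Fin n).val = if x.val ≤ y.val then y.val - x.val else n + y.val - x.val := by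
  have hx := x.isLt; have hy := y.isLt
  rw [Fin.sub_def]
  simp only [Fin.val_mk]
  split
  · have : n - x.val + y.val = (y.val - x.val) + n := by omega
    rw [this, Nat.add_mod_right, Nat.mod_eq_of_lt (by omega)]
  · rw [Nat.mod_eq_of_lt (by omega)]; omega

lemma cycOrd_of_val {n : ℕ} {i j k : Fin n} (hij : i ≠ j) (hik : i ≠ k) (hjk : j ≠ k)
    (h : ((j - i) : Fin n).val < ((k - i) : Fin n).val) : CycOrd i j k := by
  have hi := i.isLt; have hj := j.isLt; have hk := k.isLt
  have hij' : i.val ≠ j.val := fun h' => hij (Fin.ext h')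
  have hik' : i.val ≠ k.val := fun h' => hik (Fin.ext h')
  have hjk' : j.val ≠ k.val := fun h' => hjk (Fin.ext h')
  rw [subval, subval] at h
  unfold CycOrd
  simp only [Fin.lt_def]
  split_ifs at h <;> omega

/-- For a strict circular Robinson matrix, the dissimilarity from a point outside
an arc to the arc is minimized only at the borders of the arc. -/
theorem statement12 (n : ℕ) [NeZero n] (D : Fin n → Fin n → ℝ)
    (hD : IsDissim D) (hR : StrictCircRobinson D)
    (a : Fin n) (k : ℕ) (hk : k ≤ n - 2) :
    ∀ i ∉ arcSet n a k, ∀ j ∈ arcSet n a k,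
      (∀ j' ∈ arcSet n a k, D i j ≤ D i j') → j = a ∨ j = a + (k : Fin n) := by
  intro i hi j hj hmin
  by_contra hcon
  push_neg at hcon
  obtain ⟨hja, hjb⟩ := hcon
  obtain ⟨t, htk, hjt⟩ := hj
  have ht0 : t ≠ 0 := by
    rintro rfl
    exact hja (by simpa using hjt)
  have htkne : t ≠ k := by rintro rfl; exact hjb hjt
  have hn4 : 4 ≤ n := by omega
  -- the neighbors of j inside the arc
  set jp : Fin n := a + ((t + 1 : ℕ) : Fin n) with hjp_def
  set jm : Fin n := a + ((t - 1 : ℕ) : Fin n) with hjm_def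
  have hjp_mem : jp ∈ arcSet n a k := ⟨t + 1, by omega, rfl⟩
  have hjm_mem : jm ∈ arcSet n a k := ⟨t - 1, by omega, rfl⟩
  have hjp_eq : jp = j + 1 := by
    open Fin.CommRing in (rw [hjp_def, hjt]; push_cast; ring)
  have hjm_eq : j = jm + 1 := by
    rw [hjm_def, hjt]
    have : t = (t - 1) + 1 := by omega
    open Fin.CommRing in (rw [this]; push_cast; ring)
  -- numeral values
  have h1 : (1 : Fin n).val = 1 := by
    have := Fin.val_cast_of_lt (n := n) (a := 1) (by omega)
    simpa using this
  have h0 : (0 : Fin n).val = 0 := rfl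
  have h1ne : (1 : Fin n) ≠ 0 := by
    intro h; rw [h] at h1; simp [h0] at h1
  have hneg1 : ((-1 : Fin n)).val = n - 1 := by
    have hrw : (-1 : Fin n) = 0 - 1 := by open Fin.CommRing in ring
    rw [hrw, subval, h0, h1, if_neg (by omega)]; omega
  -- pairwise distinctness
  have hij : i ≠ j := by rintro rfl; exact hi ⟨t, htk, hjt⟩
  have hijp : i ≠ jp := by rintro rfl; exact hi hjp_mem
  have hijm : i ≠ jm := by rintro rfl; exact hi hjm_mem
  have hjjp : j ≠ jp := by
    intro h; rw [hjp_eq, left_eq_add] at h; exact h1ne h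
  have hjjm : j ≠ jm := by
    intro h; rw [hjm_eq] at h
    nth_rewrite 2 [← add_zero jm] at h
    exact h1ne (add_left_cancel h)
  have hjpjm : jp ≠ jm := by
    intro h
    rw [hjp_eq, hjm_eq, add_assoc] at h
    nth_rewrite 2 [← add_zero jm] at h
    have h11 : (1 + 1 : Fin n) = 0 := add_left_cancel h
    have h2 : ((2 : ℕ) : Fin n).val = 2 := Fin.val_cast_of_lt (by omega)
    have h2' : ((2 : ℕ) : Fin n) = 1 + 1 := by open Fin.CommRing in (push_cast; ring)
    rw [h2', h11, h0] at h2
    omega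
  -- value of jm - j
  have hjmj : ((jm - j) : Fin n).val = n - 1 := by
    have : jm - j = -1 := by open Fin.CommRing in (rw [hjm_eq]; ring)
    rw [this, hneg1]
  -- value of i - j
  have hu0 : ((i - j) : Fin n).val ≠ 0 := by
    intro h
    have : i - j = 0 := Fin.ext (by rw [h, h0])
    exact hij (by rwa [sub_eq_zero] at this)
  have hu1 : ((i - j) : Fin n).val ≠ 1 := by
    intro h
    have : i - j = 1 := Fin.ext (by rw [h, h1])
    rw [sub_eq_iff_eq_add] at this
    exact hijp (by rw [this, hjp_eq, add_comm])
  have hun : ((i - j) : Fin n).val ≠ n - 1 := by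
    intro h
    have heq : i - j = jm - j := Fin.ext (by rw [h, hjmj])
    have : i = jm := by
      have := congrArg (· + j) heq
      simpa [sub_add_cancel] using this
    exact hijm this
  have hubd := (i - j).isLt
  -- cyclic orders
  have hc1 : CycOrd j jp i := by
    apply cycOrd_of_val hjjp hij.symm (fun h => hijp h.symm)
    have : ((jp - j) : Fin n).val = 1 := by
      rw [hjp_eq, add_sub_cancel_left, h1]
    rw [this]; omega
  have hc2 : CycOrd j i jm := by
    apply cycOrd_of_val hij.symm hjjm hijm
    rw [hjmj]; omega
  have hcyc : CycOrd4 j jp i jm :=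
    ⟨hjjp, hij.symm, hjjm, fun h => hijp h.symm, hjpjm, hijm, hc1, hc2⟩
  have hlt := hR j jp i jm hcyc
  rcases min_lt_iff.mp hlt with h' | h'
  · rw [hD.1 jp i, hD.1 j i] at h'
    exact absurd (hmin jp hjp_mem) (not_le.mpr h')
  · rw [hD.1 j i] at h'
    exact absurd (hmin jm hjm_mem) (not_le.mpr h')
end
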